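/- Let T be a tree with positive integer vertex weights, and let e_1, e_2, e_3 be three distinct edges lying on a common path of T such that e_2 lies strictly between e_1 and e_3 on this path. Then split(e_2) > min(split(e_1), split(e_3)). (In particular, on a path between two leaves of a weighted tree there is no split of value at most b strictly between two splits of value greater than b.) -/

import Mathlib

open scoped Classical in
/-- The total weight of the component of `u` after deleting the edge `{u, v}`:
the sum of `ω w` over all vertices `w` that remain reachable from `u`. -/
noncomputable def sideWeight {V : Type*} [Fintype V] (G : SimpleGraph V)
    (ω : V → ℕ) (u v : V) : ℕ :=
  ∑ w : V, if (G.deleteEdges {s(u, v)}).Reachable w u then ω w else 0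

/-- The split of an edge of a vertex-weighted graph: the minimum of the total
weights of the two sides obtained by deleting the edge. -/
noncomputable def edgeSplit {V : Type*} [Fintype V] (G : SimpleGraph V)
    (ω : V → ℕ) : Sym2 V → ℕ :=
  Sym2.lift ⟨fun u v => min (sideWeight G ω u v) (sideWeight G ω v u),
    fun _ _ => min_comm _ _⟩

open scoped Classical in
/-- The split multiset `𝒮(T)` of a vertex-weighted graph: the multiset of the
splits of all its edges. -/
noncomputable def splitMultiset {V : Type*} [Fintype V] (G : SimpleGraph V)
    (ω : V → ℕ) : Multiset ℕ :=
  (Finset.univ.filter (fun e : Sym2 V => e ∈ G.edgeSet)).val.map (edgeSplit G ω)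

private lemma walk_edges_getElem {V : Type*} {G : SimpleGraph V} {u v : V}
    (p : G.Walk u v) (i : ℕ) (hi : i < p.length) :
    p.edges[i]'(by simpa using hi) = s(p.getVert i, p.getVert (i + 1)) := by
  induction p generalizing i with
  | nil => simp at hi
  | cons h q ih =>
    cases i with
    | zero => simp
    | succ n =>
      have hn : n < q.length := by simpa [Nat.succ_lt_succ_iff] using hi
      simpa using ih n hn

private lemma reach_endpoint {V : Type*} {G : SimpleGraph V} (b : V) :
    ∀ {w a : V} (W : G.Walk w a),
    (G.deleteEdges {s(a, b)}).Reachable w a ∨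
      ((G.deleteEdges {s(a, b)}).Reachable w b ∧ s(a, b) ∈ W.edges)
  | w, _, SimpleGraph.Walk.nil => Or.inl (SimpleGraph.Reachable.refl _)
  | w, a, SimpleGraph.Walk.cons (v := x) h q => by
    by_cases hq : s(w, x) = s(a, b)
    · rcases Sym2.eq_iff.mp hq with ⟨rfl, rfl⟩ | ⟨rfl, rfl⟩
      · exact Or.inl (SimpleGraph.Reachable.refl _)
      · exact Or.inr ⟨SimpleGraph.Reachable.refl _, by
          rw [SimpleGraph.Walk.edges_cons]
          exact List.mem_cons.mpr (Or.inl hq.symm)⟩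
    · have hadj : (G.deleteEdges {s(a, b)}).Adj w x := by
        simp only [SimpleGraph.deleteEdges_adj, Set.mem_singleton_iff]
        exact ⟨h, hq⟩
      rcases reach_endpoint b q with h' | ⟨h', hm⟩
      · exact Or.inl (hadj.reachable.trans h')
      · exact Or.inr ⟨hadj.reachable.trans h', List.mem_cons_of_mem _ hm⟩

private lemma comp_subset {V : Type*} {G : SimpleGraph V}
    (hacyc : G.IsAcyclic)
    {x y a b : V} (hxy : G.Adj x y) (hab : G.Adj a b)
    (hxa : (G.deleteEdges {s(a, b)}).Reachable x a)
    (hyb : (G.deleteEdges {s(x, y)}).Reachable y b)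
    {w : V} (hw : (G.deleteEdges {s(x, y)}).Reachable w x) :
    (G.deleteEdges {s(a, b)}).Reachable w a := by
  classical
  have hbridge := (SimpleGraph.isAcyclic_iff_forall_adj_isBridge.mp hacyc hxy)
  obtain ⟨P₀⟩ := hw
  obtain ⟨R₀⟩ := hxa
  have hPle : ∀ e ∈ P₀.edges, e ∈ G.edgeSet := fun e he =>
    ((SimpleGraph.edgeSet_deleteEdges _).subset (P₀.edges_subset_edgeSet he)).1
  have hRle : ∀ e ∈ R₀.edges, e ∈ G.edgeSet := fun e he =>
    ((SimpleGraph.edgeSet_deleteEdges _).subset (R₀.edges_subset_edgeSet he)).1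
  set P : G.Walk w x := P₀.transfer G hPle with hP
  set R : G.Walk x a := R₀.transfer G hRle with hR
  rcases reach_endpoint b (P.append R) with h' | ⟨_, hm⟩
  · exact h'
  · exfalso
    rw [SimpleGraph.Walk.edges_append, List.mem_append] at hm
    have hmR : s(a, b) ∉ R.edges := by
      rw [hR, SimpleGraph.Walk.edges_transfer]
      intro hc
      exact ((SimpleGraph.edgeSet_deleteEdges _).subset
        (R₀.edges_subset_edgeSet hc)).2 rfl
    have hmP : s(a, b) ∈ P₀.edges := by
      rcases hm with hm | hm
      · rwa [hP, SimpleGraph.Walk.edges_transfer] at hm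
      · exact absurd hm hmR
    have hbsup : b ∈ P₀.support := P₀.snd_mem_support_of_mem_edges hmP
    have hbx : (G.deleteEdges {s(x, y)}).Reachable b x := ⟨P₀.dropUntil b hbsup⟩
    exact hbridge ((hyb.trans hbx).symm)

private lemma sideWeight_lt {V : Type*} [Fintype V] {G : SimpleGraph V}
    (ω : V → ℕ) (hω : ∀ v, 0 < ω v) {x y a b : V}
    (hsub : ∀ w, (G.deleteEdges {s(x, y)}).Reachable w x →
      (G.deleteEdges {s(a, b)}).Reachable w a)
    (hy1 : ¬(G.deleteEdges {s(x, y)}).Reachable y x)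
    (hy2 : (G.deleteEdges {s(a, b)}).Reachable y a) :
    sideWeight G ω x y < sideWeight G ω a b := by
  classical
  unfold sideWeight
  apply Finset.sum_lt_sum
  · intro w _
    by_cases hw : (G.deleteEdges {s(x, y)}).Reachable w x
    · simp [hw, hsub w hw]
    · simp [hw]
  · exact ⟨y, Finset.mem_univ y, by simp [hy1, hy2, hω y]⟩

/-- in a tree with positive vertex weights, if `e1, e2, e3` are three
edges lying on a common path with `e2` strictly between `e1` and `e3`, then
`split(e2) > min (split(e1), split(e3))`. -/
theorem stmt_12 {V : Type*} [Fintype V] (G : SimpleGraph V)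
    (hconn : G.Connected) (hacyc : G.IsAcyclic)
    (ω : V → ℕ) (hω : ∀ v, 0 < ω v)
    (u v : V) (p : G.Walk u v) (hp : p.IsPath)
    (i1 i2 i3 : ℕ) (h12 : i1 < i2) (h23 : i2 < i3) (h3 : i3 < p.edges.length)
    (e1 e2 e3 : Sym2 V)
    (he1 : p.edges[i1]'(by omega) = e1)
    (he2 : p.edges[i2]'(by omega) = e2)
    (he3 : p.edges[i3]'(by omega) = e3) :
    min (edgeSplit G ω e1) (edgeSplit G ω e3) < edgeSplit G ω e2 := by
  classical
  have hlen : i3 < p.length := by simpa using h3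
  -- segment reachability
  have hnodup : p.edges.Nodup := hp.isTrail.edges_nodup
  have seg : ∀ (m : ℕ) (hm : m < p.length) (i j : ℕ), i ≤ j → j ≤ p.length →
      (m < i ∨ j ≤ m) →
      (G.deleteEdges {p.edges[m]'(by simpa using hm)}).Reachable
        (p.getVert i) (p.getVert j) := by
    intro m hm i j hij hj hcond
    induction j, hij using Nat.le_induction with
    | base => exact SimpleGraph.Reachable.refl _
    | succ j hij ih =>
      have h1 : j < p.length := by omega
      have hadj : G.Adj (p.getVert j) (p.getVert (j + 1)) := p.adj_getVert_succ h1
      have hjm : j ≠ m := by omega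
      have hne : s(p.getVert j, p.getVert (j + 1)) ≠ p.edges[m]'(by simpa using hm) := by
        rw [← walk_edges_getElem p j h1]
        intro hc
        exact hjm (hnodup.getElem_inj_iff.mp hc)
      have hadj' : (G.deleteEdges {p.edges[m]'(by simpa using hm)}).Adj
          (p.getVert j) (p.getVert (j + 1)) := by
        simp only [SimpleGraph.deleteEdges_adj, Set.mem_singleton_iff]
        exact ⟨hadj, hne⟩
      exact (ih (by omega) (by omega)).trans hadj'.reachable
  set x := p.getVert i1
  set y := p.getVert (i1 + 1)
  set a := p.getVert i2
  set b := p.getVert (i2 + 1)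
  set c := p.getVert i3
  set d := p.getVert (i3 + 1)
  have hE1 : p.edges[i1]'(by omega) = s(x, y) := walk_edges_getElem p i1 (by omega)
  have hE2 : p.edges[i2]'(by omega) = s(a, b) := walk_edges_getElem p i2 (by omega)
  have hE3 : p.edges[i3]'(by omega) = s(c, d) := walk_edges_getElem p i3 (by omega)
  have hxy : G.Adj x y := p.adj_getVert_succ (by omega)
  have hab : G.Adj a b := p.adj_getVert_succ (by omega)
  have hcd : G.Adj c d := p.adj_getVert_succ (by omega)
  -- bridges
  have hbr1 : ¬(G.deleteEdges {s(x, y)}).Reachable x y :=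
    (SimpleGraph.isAcyclic_iff_forall_adj_isBridge.mp hacyc hxy)
  have hbr3 : ¬(G.deleteEdges {s(d, c)}).Reachable d c :=
    (SimpleGraph.isAcyclic_iff_forall_adj_isBridge.mp hacyc hcd.symm)
  -- first strict inequality: sideWeight x y < sideWeight a b
  have key1 : sideWeight G ω x y < sideWeight G ω a b := by
    apply sideWeight_lt ω hω
    · intro w hw
      refine comp_subset hacyc hxy hab ?_ ?_ hw
      · have := seg i2 (by omega) i1 i2 (by omega) (by omega) (by omega)
        rw [hE2] at this
        exact this
      · have := seg i1 (by omega) (i1 + 1) (i2 + 1) (by omega) (by omega) (by omega)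
        rw [hE1] at this
        exact this
    · exact fun hc => hbr1 hc.symm
    · have := seg i2 (by omega) (i1 + 1) i2 (by omega) (by omega) (by omega)
      rw [hE2] at this
      exact this
  -- second strict inequality: sideWeight d c < sideWeight b a
  have key2 : sideWeight G ω d c < sideWeight G ω b a := by
    apply sideWeight_lt ω hω
    · intro w hw
      refine comp_subset hacyc hcd.symm hab.symm ?_ ?_ hw
      · have := seg i2 (by omega) (i2 + 1) (i3 + 1) (by omega) (by omega) (by omega)
        rw [hE2] at this
        rw [show s(b, a) = s(a, b) from Sym2.eq_swap]
        exact this.symm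
      · have := seg i3 (by omega) i2 i3 (by omega) (by omega) (by omega)
        rw [hE3] at this
        rw [show s(d, c) = s(c, d) from Sym2.eq_swap]
        exact this.symm
    · rw [show s(d, c) = s(c, d) from Sym2.eq_swap] at hbr3 ⊢
      exact fun hc => hbr3 hc.symm
    · have := seg i2 (by omega) (i2 + 1) i3 (by omega) (by omega) (by omega)
      rw [hE2] at this
      rw [show s(b, a) = s(a, b) from Sym2.eq_swap]
      exact this.symm
  -- assemble
  subst he1 he2 he3
  rw [hE1, hE2, hE3]
  have s1 : edgeSplit G ω s(x, y) ≤ sideWeight G ω x y := by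
    simp only [edgeSplit, Sym2.lift_mk]
    exact min_le_left _ _
  have s3 : edgeSplit G ω s(c, d) ≤ sideWeight G ω d c := by
    simp only [edgeSplit, Sym2.lift_mk]
    exact min_le_right _ _
  have hs2 : edgeSplit G ω s(a, b) = min (sideWeight G ω a b) (sideWeight G ω b a) := by
    simp [edgeSplit]
  rw [hs2]
  exact lt_min_iff.mpr
    ⟨lt_of_le_of_lt (le_trans (min_le_left _ _) s1) key1,
     lt_of_le_of_lt (le_trans (min_le_right _ _) s3) key2⟩
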